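/- Let Ω ⊂ ℝ^N (N ≥ 3) be a bounded smooth domain, p = 2* − 1, w ∈ H¹(Ω)∖{0} with ∫_Ω |w|^{2*−2}w = 0, and let p_n ↗ 2*−1. For each n, let c_n = c_{p_n}(w) be the unique constant with ∫_Ω |w+c_n|^{p_n−1}(w+c_n) = 0. Then the sequence (c_n) is bounded, c_n → 0, and ‖w + c_n‖_{L^{p_n+1}(Ω)} → ‖w‖_{L^{2*}(Ω)} as n → ∞. -/

import Mathlib

open MeasureTheory Real Filter Topology
open scoped ENNReal

noncomputable section

abbrev Euc (N : ℕ) := EuclideanSpace ℝ (Fin N)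

private lemma g_eval_nonneg {t q : ℝ} (ht : 0 ≤ t) (hq : q + 1 ≠ 0) :
    |t| ^ q * t = t ^ (q + 1) := by
  rcases eq_or_lt_of_le ht with h | h
  · simp [← h, Real.zero_rpow hq]
  · rw [abs_of_pos h, Real.rpow_add_one h.ne']

private lemma g_eval_neg {t q : ℝ} (ht : t < 0) :
    |t| ^ q * t = -((-t) ^ (q + 1)) := by
  rw [abs_of_neg ht, Real.rpow_add_one (neg_pos.mpr ht).ne']
  ring

private lemma g_strictMono {q : ℝ} (hq : -1 < q) :
    StrictMono (fun t : ℝ => |t| ^ q * t) := by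
  have hq1 : 0 < q + 1 := by linarith
  intro a b hab
  simp only
  rcases le_or_gt 0 a with ha | ha
  · rw [g_eval_nonneg ha hq1.ne', g_eval_nonneg (le_trans ha hab.le) hq1.ne']
    exact Real.rpow_lt_rpow ha hab hq1
  · rcases lt_or_ge b 0 with hb | hb
    · rw [g_eval_neg ha, g_eval_neg hb]
      have h2 : (-b) ^ (q + 1) < (-a) ^ (q + 1) :=
        Real.rpow_lt_rpow (by linarith) (by linarith) hq1
      linarith
    · have h1 : |a| ^ q * a < 0 :=
        mul_neg_of_pos_of_neg (Real.rpow_pos_of_pos (abs_pos.mpr ha.ne) q) ha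
      have h2 : 0 ≤ |b| ^ q * b :=
        mul_nonneg (Real.rpow_nonneg (abs_nonneg b) q) hb
      linarith

private lemma abs_g {u q : ℝ} (hq : 0 < q + 1) :
    |(|u| ^ q * u)| = |u| ^ (q + 1) := by
  have h := g_eval_nonneg (t := |u|) (abs_nonneg u) hq.ne'
  rw [abs_abs] at h
  rw [abs_mul, abs_of_nonneg (Real.rpow_nonneg (abs_nonneg u) q), h]

private lemma rpow_bound {t a p Q u : ℝ} (ha : 0 ≤ a) (hu : 0 ≤ u)
    (hut : u ≤ |t| + a) (hp : 0 ≤ p) (hpQ : p ≤ Q) :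
    u ^ p ≤ (2 * (1 + a)) ^ Q * (1 + |t| ^ Q) := by
  have hm1 : (1 : ℝ) ≤ max 1 |t| := le_max_left _ _
  have hm2 : |t| ≤ max 1 |t| := le_max_right _ _
  have h1 : (1 : ℝ) ≤ 2 * (1 + a) * max 1 |t| := by nlinarith
  have h2 : u ≤ 2 * (1 + a) * max 1 |t| := by nlinarith
  have hmax : (max 1 |t|) ^ Q ≤ 1 + |t| ^ Q := by
    rcases le_total |t| 1 with h | h
    · rw [max_eq_left h, Real.one_rpow]
      have := Real.rpow_nonneg (abs_nonneg t) Q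
      linarith
    · rw [max_eq_right h]
      linarith
  calc u ^ p ≤ (2 * (1 + a) * max 1 |t|) ^ p := Real.rpow_le_rpow hu h2 hp
    _ ≤ (2 * (1 + a) * max 1 |t|) ^ Q := Real.rpow_le_rpow_of_exponent_le h1 hpQ
    _ = (2 * (1 + a)) ^ Q * (max 1 |t|) ^ Q :=
        Real.mul_rpow (by nlinarith) (by linarith)
    _ ≤ (2 * (1 + a)) ^ Q * (1 + |t| ^ Q) := by
        refine mul_le_mul_of_nonneg_left hmax (Real.rpow_nonneg (by nlinarith) Q)

/-- for `w ∈ H¹(Ω) ⊆ L^{2*}(Ω)` nontrivial with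
`∫_Ω |w|^{2*−2}w = 0` and `p_n ↗ 2*−1`, the constants `c_n = c_{p_n}(w)` are
bounded, converge to `0`, and `‖w + c_n‖_{p_n+1} → ‖w‖_{2*}`. -/
theorem translation_constants_tendsto_zero
    {N : ℕ} (hN : 3 ≤ N) (Ω : Set (Euc N)) (hΩm : MeasurableSet Ω)
    (hΩpos : 0 < volume Ω) (hΩfin : volume Ω < ⊤)
    (w : Euc N → ℝ)
    (hw : MemLp w (ENNReal.ofReal (2 * (N : ℝ) / ((N : ℝ) - 2))) (volume.restrict Ω))
    (hwne : ¬ (∀ᵐ x ∂(volume.restrict Ω), w x = 0))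
    (hwcon : (∫ x in Ω, |w x| ^ (2 * (N : ℝ) / ((N : ℝ) - 2) - 2) * w x) = 0)
    (pn : ℕ → ℝ) (hpn : ∀ n, 0 < pn n ∧ pn n < ((N : ℝ) + 2) / ((N : ℝ) - 2))
    (hmono : Monotone pn)
    (hlim : Tendsto pn atTop (nhds (((N : ℝ) + 2) / ((N : ℝ) - 2))))
    (c : ℕ → ℝ)
    (hc : ∀ n, (∫ x in Ω, |w x + c n| ^ (pn n - 1) * (w x + c n)) = 0) :
    Bornology.IsBounded (Set.range c) ∧
      Tendsto c atTop (nhds 0) ∧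
      Tendsto (fun n => (∫ x in Ω, |w x + c n| ^ (pn n + 1)) ^ (1 / (pn n + 1))) atTop
        (nhds ((∫ x in Ω, |w x| ^ (2 * (N : ℝ) / ((N : ℝ) - 2))) ^
          (((N : ℝ) - 2) / (2 * (N : ℝ))))) := by
  haveI : IsFiniteMeasure (volume.restrict Ω) :=
    ⟨by rwa [Measure.restrict_apply_univ]⟩
  have hN' : (2 : ℝ) < (N : ℝ) := by
    have : (3 : ℝ) ≤ (N : ℝ) := by exact_mod_cast hN
    linarith
  have hden : (0 : ℝ) < (N : ℝ) - 2 := by linarith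
  set Q : ℝ := 2 * (N : ℝ) / ((N : ℝ) - 2) with hQdef
  have hQ2 : Q = ((N : ℝ) + 2) / ((N : ℝ) - 2) + 1 := by
    rw [hQdef]; field_simp; ring
  have hQgt2 : 2 < Q := by
    rw [hQdef, lt_div_iff₀ hden]; linarith
  have hQpos : 0 < Q := by linarith
  have hE : Q - 2 = ((N : ℝ) + 2) / ((N : ℝ) - 2) - 1 := by rw [hQ2]; ring
  have hpnQ : ∀ n, pn n + 1 ≤ Q := by
    intro n
    have h := (hpn n).2
    rw [hQ2]; linarith
  -- measurability
  have hwm : AEMeasurable w (volume.restrict Ω) := hw.1.aemeasurable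
  have hmeas : ∀ (q cc : ℝ),
      AEStronglyMeasurable (fun x => |w x + cc| ^ q * (w x + cc)) (volume.restrict Ω) := by
    intro q cc
    have h1 : Measurable (fun t : ℝ => |t + cc| ^ q * (t + cc)) := by fun_prop
    exact (h1.comp_aemeasurable hwm).aestronglyMeasurable
  have hmeas' : ∀ (q cc : ℝ),
      AEStronglyMeasurable (fun x => |w x + cc| ^ q) (volume.restrict Ω) := by
    intro q cc
    have h1 : Measurable (fun t : ℝ => |t + cc| ^ q) := by fun_prop
    exact (h1.comp_aemeasurable hwm).aestronglyMeasurable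
  -- integrability
  have hIw : Integrable (fun x => |w x| ^ Q) (volume.restrict Ω) := by
    have h := hw.integrable_norm_rpow (by simp [hQdef, ENNReal.ofReal_eq_zero]; linarith)
      ENNReal.ofReal_ne_top
    simpa [Real.norm_eq_abs, ENNReal.toReal_ofReal hQpos.le] using h
  have hBint : ∀ a : ℝ, Integrable
      (fun x => (2 * (1 + a)) ^ Q * (1 + |w x| ^ Q)) (volume.restrict Ω) :=
    fun a => ((integrable_const (1 : ℝ)).add hIw).const_mul _
  have hIg : ∀ (q cc : ℝ), 0 < q + 1 → q + 1 ≤ Q →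
      Integrable (fun x => |w x + cc| ^ q * (w x + cc)) (volume.restrict Ω) := by
    intro q cc hq hqQ
    refine Integrable.mono (hBint |cc|) (hmeas q cc) ?_
    filter_upwards with x
    rw [Real.norm_eq_abs, abs_g hq, Real.norm_eq_abs,
      abs_of_nonneg (by positivity : (0:ℝ) ≤ (2 * (1 + |cc|)) ^ Q * (1 + |w x| ^ Q))]
    refine rpow_bound (abs_nonneg cc) (abs_nonneg _) (abs_add_le _ _) hq.le hqQ
  -- monotone comparison
  have hmono_int : ∀ (n : ℕ) (d e : ℝ), d ≤ e →
      (∫ x in Ω, |w x + d| ^ (pn n - 1) * (w x + d)) ≤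
        (∫ x in Ω, |w x + e| ^ (pn n - 1) * (w x + e)) := by
    intro n d e hde
    have hp0 := (hpn n).1
    have hq : -1 < pn n - 1 := by linarith
    refine integral_mono_ae (hIg _ _ (by linarith) (by linarith [hpnQ n]))
      (hIg _ _ (by linarith) (by linarith [hpnQ n])) ?_
    filter_upwards with x
    exact (g_strictMono hq).monotone (by linarith : w x + d ≤ w x + e)
  -- dominated convergence for the defining integrals
  have hDCT : ∀ cc : ℝ, Tendsto
      (fun n => ∫ x in Ω, |w x + cc| ^ (pn n - 1) * (w x + cc)) atTop
      (𝓝 (∫ x in Ω, |w x + cc| ^ (Q - 2) * (w x + cc))) := by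
    intro cc
    refine tendsto_integral_of_dominated_convergence
      (fun x => (2 * (1 + |cc|)) ^ Q * (1 + |w x| ^ Q))
      (fun n => hmeas _ _) (hBint _) ?_ ?_
    · intro n
      filter_upwards with x
      have hp0 := (hpn n).1
      rw [Real.norm_eq_abs, abs_g (by linarith : 0 < pn n - 1 + 1)]
      have he : pn n - 1 + 1 = pn n := by ring
      rw [he]
      refine rpow_bound (abs_nonneg cc) (abs_nonneg _) (abs_add_le _ _) hp0.le ?_
      linarith [hpnQ n]
    · filter_upwards with x
      have he : Tendsto (fun n => pn n - 1) atTop (𝓝 (Q - 2)) := by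
        rw [hE]; exact hlim.sub_const 1
      exact ((tendsto_const_nhds (x := |w x + cc|)).rpow he
        (Or.inr (by linarith))).mul tendsto_const_nhds
  -- positivity / negativity of the limiting functional at ±ε
  have hI0 : Integrable (fun x => |w x| ^ (Q - 2) * w x) (volume.restrict Ω) := by
    have h := hIg (Q - 2) 0 (by linarith) (by linarith)
    simp only [add_zero] at h
    exact h
  have hpos_eps : ∀ ε : ℝ, 0 < ε →
      0 < ∫ x in Ω, |w x + ε| ^ (Q - 2) * (w x + ε) := by
    intro ε hε
    have hq : -1 < Q - 2 := by linarith
    have h1 : Integrable (fun x => |w x + ε| ^ (Q - 2) * (w x + ε)) (volume.restrict Ω) :=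
      hIg _ _ (by linarith) (by linarith)
    have hdiff : 0 < ∫ x in Ω,
        (|w x + ε| ^ (Q - 2) * (w x + ε) - |w x| ^ (Q - 2) * w x) := by
      have hint : Integrable
          (fun x => |w x + ε| ^ (Q - 2) * (w x + ε) - |w x| ^ (Q - 2) * w x)
          (volume.restrict Ω) := h1.sub hI0
      rw [integral_pos_iff_support_of_nonneg_ae ?_ hint]
      · have hsupp : Function.support
            (fun x => |w x + ε| ^ (Q - 2) * (w x + ε) - |w x| ^ (Q - 2) * w x) = Set.univ := by
          refine Set.eq_univ_of_forall fun x => ?_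
          have := g_strictMono hq (by linarith : w x < w x + ε)
          simp only [Function.mem_support]
          intro h
          simp only at this
          nlinarith [this]
        rw [hsupp, Measure.restrict_apply_univ]
        exact hΩpos
      · filter_upwards with x
        have := g_strictMono hq (by linarith : w x < w x + ε)
        simp only [Pi.zero_apply] at this ⊢
        nlinarith [this]
    rw [integral_sub h1 hI0, hwcon, sub_zero] at hdiff
    exact hdiff
  have hneg_eps : ∀ ε : ℝ, 0 < ε →
      (∫ x in Ω, |w x + (-ε)| ^ (Q - 2) * (w x + (-ε))) < 0 := by
    intro ε hε
    have hq : -1 < Q - 2 := by linarith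
    have h1 : Integrable (fun x => |w x + (-ε)| ^ (Q - 2) * (w x + (-ε))) (volume.restrict Ω) :=
      hIg _ _ (by linarith) (by linarith)
    have hdiff : 0 < ∫ x in Ω,
        (|w x| ^ (Q - 2) * w x - |w x + (-ε)| ^ (Q - 2) * (w x + (-ε))) := by
      have hint : Integrable
          (fun x => |w x| ^ (Q - 2) * w x - |w x + (-ε)| ^ (Q - 2) * (w x + (-ε)))
          (volume.restrict Ω) := hI0.sub h1
      rw [integral_pos_iff_support_of_nonneg_ae ?_ hint]
      · have hsupp : Function.support
            (fun x => |w x| ^ (Q - 2) * w x - |w x + (-ε)| ^ (Q - 2) * (w x + (-ε))) = Set.univ := by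
          refine Set.eq_univ_of_forall fun x => ?_
          have := g_strictMono hq (by linarith : w x + (-ε) < w x)
          simp only [Function.mem_support]
          intro h
          simp only at this
          nlinarith [this]
        rw [hsupp, Measure.restrict_apply_univ]
        exact hΩpos
      · filter_upwards with x
        have := g_strictMono hq (by linarith : w x + (-ε) < w x)
        simp only [Pi.zero_apply] at this ⊢
        nlinarith [this]
    rw [integral_sub hI0 h1, hwcon, zero_sub] at hdiff
    linarith
  -- key eventual bound
  have key : ∀ ε : ℝ, 0 < ε → ∀ᶠ n in atTop, |c n| < ε := by
    intro ε hε
    have h1 := (hDCT ε).eventually_const_lt (hpos_eps ε hε)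
    have h2 := (hDCT (-ε)).eventually_lt_const (hneg_eps ε hε)
    filter_upwards [h1, h2] with n h1n h2n
    rw [abs_lt]
    constructor
    · by_contra h
      push_neg at h
      have := hmono_int n (c n) (-ε) (by linarith)
      rw [hc n] at this
      linarith
    · by_contra h
      push_neg at h
      have := hmono_int n ε (c n) h
      rw [hc n] at this
      linarith
  have hczero : Tendsto c atTop (𝓝 0) := by
    rw [NormedAddCommGroup.tendsto_nhds_zero]
    intro ε hε
    simpa [Real.norm_eq_abs] using key ε hε
  have hbdd := Metric.isBounded_range_of_tendsto c hczero
  have hMex : ∃ M : ℝ, ∀ n, |c n| ≤ M := by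
    obtain ⟨C, hC⟩ := isBounded_iff_forall_norm_le.mp hbdd
    exact ⟨C, fun n => by simpa [Real.norm_eq_abs] using hC (c n) ⟨n, rfl⟩⟩
  obtain ⟨M, hM⟩ := hMex
  have hM0 : 0 ≤ M := le_trans (abs_nonneg (c 0)) (hM 0)
  -- positivity of the limiting norm
  have hIpos : 0 < ∫ x in Ω, |w x| ^ Q := by
    rw [integral_pos_iff_support_of_nonneg_ae
      (Filter.Eventually.of_forall fun x => Real.rpow_nonneg (abs_nonneg _) _) hIw]
    have hsupp : Function.support (fun x => |w x| ^ Q) = {x | ¬ w x = 0} := by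
      ext x
      simp [Function.mem_support, Real.rpow_eq_zero_iff_of_nonneg (abs_nonneg _),
        hQpos.ne', abs_eq_zero]
    rw [hsupp, pos_iff_ne_zero]
    intro h
    exact hwne (ae_iff.mpr h)
  -- final dominated convergence
  have hItend : Tendsto (fun n => ∫ x in Ω, |w x + c n| ^ (pn n + 1)) atTop
      (𝓝 (∫ x in Ω, |w x| ^ Q)) := by
    refine tendsto_integral_of_dominated_convergence
      (fun x => (2 * (1 + M)) ^ Q * (1 + |w x| ^ Q))
      (fun n => hmeas' _ _) (hBint M) ?_ ?_
    · intro n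
      filter_upwards with x
      have hp0 := (hpn n).1
      rw [Real.norm_eq_abs, abs_of_nonneg (Real.rpow_nonneg (abs_nonneg _) _)]
      refine rpow_bound hM0 (abs_nonneg _) ?_ (by linarith) (hpnQ n)
      calc |w x + c n| ≤ |w x| + |c n| := abs_add_le _ _
        _ ≤ |w x| + M := by linarith [hM n]
    · filter_upwards with x
      have hb : Tendsto (fun n => |w x + c n|) atTop (𝓝 |w x|) := by
        have h := ((tendsto_const_nhds (x := w x)).add hczero).abs
        simpa using h
      have he : Tendsto (fun n => pn n + 1) atTop (𝓝 Q) := by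
        rw [hQ2]; exact hlim.add_const 1
      exact hb.rpow he (Or.inr hQpos)
  have hexp : Tendsto (fun n => 1 / (pn n + 1)) atTop (𝓝 (1 / Q)) := by
    refine Tendsto.div tendsto_const_nhds ?_ hQpos.ne'
    rw [hQ2]; exact hlim.add_const 1
  have hfin := hItend.rpow hexp (Or.inl hIpos.ne')
  have hexpeq : 1 / Q = ((N : ℝ) - 2) / (2 * (N : ℝ)) := by
    rw [hQdef, one_div_div]
  refine ⟨hbdd, hczero, ?_⟩
  rw [← hexpeq]
  exact hfin
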